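/- arXiv:2204.03757 — 5 statements merged into one kernel-verified Lean document; each statement's English description precedes it below -/
import Mathlib

section
/- Let G be an induced subgraph of a finite simple graph H (via an injection φ: V(G) → V(H) preserving adjacency and non-adjacency), and let B be a standard zero forcing set of G with propagation time p. Then B' = V(H) \ φ(V(G)\B) is a standard zero forcing set of H with propagation time at most p. -/
open SimpleGraph Set

/-- `v` can force `w` under the standard color change rule given blue set `B`. -/
def canForce {V : Type*} (G : SimpleGraph V) (B : Set V) (v w : V) : Prop :=
  v ∈ B ∧ w ∉ B ∧ G.Adj v w ∧ ∀ u, G.Adj v u → u ∉ B → u = w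

/-- One simultaneous round of standard zero forcing. -/
def zfStep {V : Type*} (G : SimpleGraph V) (B : Set V) : Set V :=
  B ∪ {w | ∃ v, canForce G B v w}

/-- The blue set after `t` simultaneous rounds. -/
def zfIter {V : Type*} (G : SimpleGraph V) (B : Set V) : ℕ → Set V
  | 0 => B
  | t + 1 => zfStep G (zfIter G B t)

/-- `B` is a standard zero forcing set of `G`. -/
def IsZFS {V : Type*} (G : SimpleGraph V) (B : Set V) : Prop :=
  ∃ t, zfIter G B t = Set.univ

/-- Propagation time of `B` in `G`. -/
noncomputable def zfpt {V : Type*} (G : SimpleGraph V) (B : Set V) : ℕ :=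
  sInf {t | zfIter G B t = Set.univ}

theorem induced_subgraph_zfs {V W : Type*} [Fintype V] [Fintype W]
    (G : SimpleGraph V) (H : SimpleGraph W) (φ : V → W)
    (hinj : Function.Injective φ)
    (hadj : ∀ a b : V, H.Adj (φ a) (φ b) ↔ G.Adj a b)
    (B : Set V) (hB : IsZFS G B) :
    IsZFS H (Set.univ \ (φ '' (Set.univ \ B))) ∧
      zfpt H (Set.univ \ (φ '' (Set.univ \ B))) ≤ zfpt G B := by
  have key : ∀ t : ℕ, Set.univ \ (φ '' (Set.univ \ zfIter G B t)) ⊆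
      zfIter H (Set.univ \ (φ '' (Set.univ \ B))) t := by
    intro t
    induction t with
    | zero => exact subset_refl _
    | succ t ih =>
      intro w hw
      by_cases hw' : w ∈ zfIter H (Set.univ \ (φ '' (Set.univ \ B))) t
      · exact Or.inl hw'
      · -- w ∉ C', so w ∈ φ '' (univ \ C)
        have hwC : w ∈ φ '' (Set.univ \ zfIter G B t) := by
          by_contra h
          exact hw' (ih ⟨trivial, h⟩)
        obtain ⟨a, ha, rfl⟩ := hwC
        have ha' : a ∈ zfIter G B (t + 1) := by
          by_contra h
          exact hw.2 ⟨a, ⟨trivial, h⟩, rfl⟩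
        rcases ha' with haC | ⟨v, hv⟩
        · exact absurd haC ha.2
        · refine Or.inr ⟨φ v, ?_, hw', (hadj v a).2 hv.2.2.1, ?_⟩
          · -- φ v ∈ C'
            apply ih
            refine ⟨trivial, ?_⟩
            rintro ⟨b, hb, hba⟩
            exact hb.2 (hinj hba ▸ hv.1)
          · intro u hu hu'
            have huC : u ∈ φ '' (Set.univ \ zfIter G B t) := by
              by_contra h
              exact hu' (ih ⟨trivial, h⟩)
            obtain ⟨b, hb, rfl⟩ := huC
            have : b = a := hv.2.2.2 b ((hadj v b).1 hu) hb.2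
            exact this ▸ rfl
  have main : ∀ t : ℕ, zfIter G B t = Set.univ →
      zfIter H (Set.univ \ (φ '' (Set.univ \ B))) t = Set.univ := by
    intro t ht
    apply Set.eq_univ_of_univ_subset
    have := key t
    rw [ht] at this
    simpa using this
  obtain ⟨t, ht⟩ := hB
  constructor
  · exact ⟨t, main t ht⟩
  · have hne : zfpt G B ∈ {t | zfIter G B t = Set.univ} :=
      Nat.sInf_mem ⟨t, ht⟩
    exact Nat.sInf_le (main _ hne)
end

section
/- For every nonnegative real ω and every integer k, a graph G satisfies th^ω_Z(G) < |V(G)| − k if and only if there exists a standard zero forcing set B of G such that Σ_{i=1}^{pt(G;B)} (|B^(i)| − ω) > k, where B^(i) is the set of vertices first turned blue in round i. -/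
open SimpleGraph Set

/-- Weighted standard throttling number. -/
noncomputable def thw {V : Type*} (G : SimpleGraph V) (ω : ℝ) : ℝ :=
  sInf {x : ℝ | ∃ B : Set V, IsZFS G B ∧ x = (B.ncard : ℝ) + ω * (zfpt G B : ℝ)}

lemma zfIter_subset_succ {V : Type*} (G : SimpleGraph V) (B : Set V) (t : ℕ) :
    zfIter G B t ⊆ zfIter G B (t + 1) := by
  simp [zfIter, zfStep]

lemma zfIter_mono {V : Type*} (G : SimpleGraph V) (B : Set V) :
    Monotone (zfIter G B) :=
  monotone_nat_of_le_succ (zfIter_subset_succ G B)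

lemma zfpt_spec {V : Type*} (G : SimpleGraph V) {B : Set V} (h : IsZFS G B) :
    zfIter G B (zfpt G B) = Set.univ :=
  Nat.sInf_mem h

lemma telescope {f : ℕ → ℝ} (n : ℕ) :
    ∑ i ∈ Finset.Icc 1 n, (f i - f (i - 1)) = f n - f 0 := by
  induction n with
  | zero => simp
  | succ n ih =>
    rw [Finset.sum_Icc_succ_top (by omega : 1 ≤ n + 1), ih]
    simp only [Nat.add_sub_cancel]
    ring

lemma key {V : Type*} [Fintype V] (G : SimpleGraph V) (B : Set V) (ω : ℝ)
    (h : IsZFS G B) :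
    ∑ i ∈ Finset.Icc 1 (zfpt G B),
        (((zfIter G B i \ zfIter G B (i - 1)).ncard : ℝ) - ω)
      = (Fintype.card V : ℝ) - (B.ncard : ℝ) - ω * (zfpt G B : ℝ) := by
  have hfin : ∀ t, (zfIter G B t).Finite := fun t => Set.toFinite _
  have hdiff : ∀ i ∈ Finset.Icc 1 (zfpt G B),
      ((zfIter G B i \ zfIter G B (i - 1)).ncard : ℝ)
        = ((zfIter G B i).ncard : ℝ) - ((zfIter G B (i - 1)).ncard : ℝ) := by
    intro i hi
    have hsub : zfIter G B (i - 1) ⊆ zfIter G B i := zfIter_mono G B (by omega)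
    rw [Set.ncard_diff hsub, Nat.cast_sub (Set.ncard_le_ncard hsub (hfin i))]
  rw [Finset.sum_sub_distrib, Finset.sum_congr rfl hdiff,
    telescope (f := fun i => ((zfIter G B i).ncard : ℝ))]
  simp only [zfIter, Finset.sum_const, Nat.card_Icc, Nat.add_sub_cancel, nsmul_eq_mul]
  rw [zfpt_spec G h, Set.ncard_univ, Nat.card_eq_fintype_card]
  ring

theorem thw_lt_iff_savings {V : Type*} [Fintype V] (G : SimpleGraph V)
    (ω : ℝ) (hω : 0 ≤ ω) (k : ℤ) :
    thw G ω < (Fintype.card V : ℝ) - (k : ℝ) ↔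
      ∃ B : Set V, IsZFS G B ∧
        (k : ℝ) < ∑ i ∈ Finset.Icc 1 (zfpt G B),
          (((zfIter G B i \ zfIter G B (i - 1)).ncard : ℝ) - ω) := by
  have hne : {x : ℝ | ∃ B : Set V, IsZFS G B ∧
      x = (B.ncard : ℝ) + ω * (zfpt G B : ℝ)}.Nonempty :=
    ⟨_, Set.univ, ⟨0, rfl⟩, rfl⟩
  have hbdd : BddBelow {x : ℝ | ∃ B : Set V, IsZFS G B ∧
      x = (B.ncard : ℝ) + ω * (zfpt G B : ℝ)} := by
    refine ⟨0, fun x hx => ?_⟩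
    obtain ⟨B, _, rfl⟩ := hx
    positivity
  rw [thw, csInf_lt_iff hbdd hne]
  constructor
  · rintro ⟨x, ⟨B, hB, rfl⟩, hx⟩
    exact ⟨B, hB, by rw [key G B ω hB]; linarith⟩
  · rintro ⟨B, hB, hx⟩
    rw [key G B ω hB] at hx
    exact ⟨_, ⟨B, hB, rfl⟩, by linarith⟩
end

section
/- Fix a nonnegative integer k and a nonnegative real ω. The property 'th^ω_Z(G) < |V(G)| − k' is preserved under taking induced supergraphs: if G is an induced subgraph of H and th^ω_Z(G) < |V(G)| − k, then th^ω_Z(H) < |V(H)| − k. -/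
open SimpleGraph Set

lemma zfIter_embed {V W : Type*} (G : SimpleGraph V) (H : SimpleGraph W) (φ : G ↪g H)
    (B : Set V) (t : ℕ) :
    φ '' (zfIter G B t) ∪ (Set.range φ)ᶜ ⊆ zfIter H (φ '' B ∪ (Set.range φ)ᶜ) t := by
  induction t with
  | zero => simp [zfIter]
  | succ t ih =>
    intro w hw
    rcases hw with hw | hw
    · rcases hw with ⟨v, hv, rfl⟩
      rcases hv with hv | ⟨u, hu⟩
      · exact Or.inl (ih (Or.inl ⟨v, hv, rfl⟩))
      · by_cases hmem : φ v ∈ zfIter H (φ '' B ∪ (Set.range φ)ᶜ) t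
        · exact Or.inl hmem
        · refine Or.inr ⟨φ u, ih (Or.inl ⟨u, hu.1, rfl⟩), hmem, φ.map_adj_iff.mpr hu.2.2.1, ?_⟩
          intro x hx hxmem
          have hx' : x ∈ Set.range φ := by
            by_contra hc
            exact hxmem (ih (Or.inr hc))
          obtain ⟨x', rfl⟩ := hx'
          have h1 : G.Adj u x' := φ.map_adj_iff.mp hx
          have h2 : x' ∉ zfIter G B t := fun hxx => hxmem (ih (Or.inl ⟨x', hxx, rfl⟩))
          rw [hu.2.2.2 x' h1 h2]
    · exact Or.inl (ih (Or.inr hw))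

theorem thw_preserved_induced_supergraph {V W : Type*} [Fintype V] [Fintype W]
    (G : SimpleGraph V) (H : SimpleGraph W) (φ : G ↪g H)
    (ω : ℝ) (hω : 0 ≤ ω) (k : ℤ)
    (h : thw G ω < (Fintype.card V : ℝ) - (k : ℝ)) :
    thw H ω < (Fintype.card W : ℝ) - (k : ℝ) := by
  -- extract a good B for G
  have hne : {x : ℝ | ∃ B : Set V, IsZFS G B ∧ x = (B.ncard : ℝ) + ω * (zfpt G B : ℝ)}.Nonempty := by
    refine ⟨(Set.univ : Set V).ncard + ω * (zfpt G Set.univ : ℝ), Set.univ, ⟨0, rfl⟩, rfl⟩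
  have hbdd : BddBelow {x : ℝ | ∃ B : Set V, IsZFS G B ∧ x = (B.ncard : ℝ) + ω * (zfpt G B : ℝ)} := by
    refine ⟨0, fun x hx => ?_⟩
    obtain ⟨B, _, rfl⟩ := hx
    positivity
  obtain ⟨x, hxmem, hxlt⟩ := (csInf_lt_iff hbdd hne).mp h
  obtain ⟨B, hB, rfl⟩ := hxmem
  set B' : Set W := φ '' B ∪ (Set.range φ)ᶜ with hB'def
  -- B' is a ZFS of H
  obtain ⟨t, ht⟩ := hB
  have hptmem : zfIter G B (zfpt G B) = Set.univ := by
    have h0 : zfpt G B ∈ {t | zfIter G B t = Set.univ} := by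
      unfold zfpt; exact Nat.sInf_mem ⟨t, ht⟩
    exact h0
  have hHuniv : zfIter H B' (zfpt G B) = Set.univ := by
    apply Set.eq_univ_of_univ_subset
    intro w _
    by_cases hw : w ∈ Set.range φ
    · obtain ⟨v, rfl⟩ := hw
      exact zfIter_embed G H φ B (zfpt G B) (Or.inl ⟨v, by rw [hptmem]; trivial, rfl⟩)
    · exact zfIter_embed G H φ B (zfpt G B) (Or.inr hw)
  have hZFS' : IsZFS H B' := ⟨zfpt G B, hHuniv⟩
  have hpt' : zfpt H B' ≤ zfpt G B := Nat.sInf_le hHuniv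
  -- cardinality of B'
  have hcardle : Fintype.card V ≤ Fintype.card W := Fintype.card_le_of_embedding φ.toEmbedding
  have hinj : Function.Injective φ := φ.injective
  have hrange : (Set.range φ).ncard = Fintype.card V := by
    rw [← Nat.card_coe_set_eq, Nat.card_range_of_injective hinj, Nat.card_eq_fintype_card]
  have hcompl : ((Set.range φ)ᶜ).ncard = Fintype.card W - Fintype.card V := by
    have h0 := Set.ncard_add_ncard_compl (Set.range φ)
    rw [hrange, Nat.card_eq_fintype_card] at h0
    omega
  have hcard' : B'.ncard = B.ncard + (Fintype.card W - Fintype.card V) := by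
    rw [hB'def, Set.ncard_union_eq (Set.disjoint_compl_right_iff_subset.mpr
      (Set.image_subset_range φ B)) (Set.toFinite _) (Set.toFinite _),
      Set.ncard_image_of_injective _ hinj, hcompl]
  -- thw H ≤ value of B'
  have hle : thw H ω ≤ (B'.ncard : ℝ) + ω * (zfpt H B' : ℝ) := by
    apply csInf_le
    · refine ⟨0, fun x hx => ?_⟩
      obtain ⟨C, _, rfl⟩ := hx
      positivity
    · exact ⟨B', hZFS', rfl⟩
  have hfinal : (B'.ncard : ℝ) + ω * (zfpt H B' : ℝ) <
      (Fintype.card W : ℝ) - (k : ℝ) := by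
    have h1 : (B'.ncard : ℝ) = (B.ncard : ℝ) + (Fintype.card W : ℝ) - (Fintype.card V : ℝ) := by
      rw [hcard']
      push_cast [Nat.cast_sub hcardle]
      ring
    have h2 : ω * (zfpt H B' : ℝ) ≤ ω * (zfpt G B : ℝ) := by
      apply mul_le_mul_of_nonneg_left _ hω
      exact_mod_cast hpt'
    rw [h1]
    linarith
  linarith
end

section
/- Let G be a graph with a standard zero forcing set B, and suppose x₁ → x₂ → ⋯ → x_m is a forcing chain of a set of forces F that is uniformly as fast as possible (each vertex is forced at the earliest possible round over all sets of forces). If x_i is adjacent to x_j for j ≥ i + 2, then x_i could validly force x_j at the round when x_i forces x_{i+1}, contradicting minimality; hence consecutive-skipping adjacencies force earlier infection. In particular, for the standard rule, such a chain x₁, …, x_m induces a path in G. -/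
open SimpleGraph Set

/-- The first round at which `v` is blue (the uniformly-fastest time, since the
simultaneous-round process performs every force as early as possible). -/
noncomputable def zfTime {V : Type*} (G : SimpleGraph V) (B : Set V) (v : V) : ℕ :=
  sInf {t | v ∈ zfIter G B t}

lemma zfTime_mem {V : Type*} (G : SimpleGraph V) (B : Set V) (hB : IsZFS G B) (v : V) :
    v ∈ zfIter G B (zfTime G B v) := by
  obtain ⟨t, ht⟩ := hB
  have hne : {s | v ∈ zfIter G B s}.Nonempty := ⟨t, show v ∈ zfIter G B t by rw [ht]; trivial⟩
  exact Nat.sInf_mem hne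

lemma zfTime_le {V : Type*} {G : SimpleGraph V} {B : Set V} {v : V} {t : ℕ}
    (h : v ∈ zfIter G B t) : zfTime G B v ≤ t := Nat.sInf_le h

theorem fast_chain_induces_path {V : Type*} [Fintype V] (G : SimpleGraph V)
    (B : Set V) (hB : IsZFS G B) (m : ℕ) (x : Fin m → V)
    (hchain : ∀ i : Fin m, ∀ h : i.val + 1 < m,
      canForce G (zfIter G B (zfTime G B (x ⟨i.val + 1, h⟩) - 1)) (x i) (x ⟨i.val + 1, h⟩)) :
    Function.Injective x ∧
      ∀ i j : Fin m, G.Adj (x i) (x j) ↔ (i.val + 1 = j.val ∨ j.val + 1 = i.val) := by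
  have hstep : ∀ (i : ℕ) (h : i + 1 < m),
      zfTime G B (x ⟨i, Nat.lt_of_succ_lt h⟩) < zfTime G B (x ⟨i + 1, h⟩) := by
    intro i h
    obtain ⟨hv, hw, hadj, huniq⟩ := hchain ⟨i, Nat.lt_of_succ_lt h⟩ h
    have hle : zfTime G B (x ⟨i, Nat.lt_of_succ_lt h⟩) ≤ zfTime G B (x ⟨i + 1, h⟩) - 1 :=
      zfTime_le hv
    have hne : zfTime G B (x ⟨i + 1, h⟩) ≠ 0 := by
      intro h0
      have hm := zfTime_mem G B hB (x ⟨i + 1, h⟩)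
      rw [h0] at hm hw
      exact hw hm
    omega
  have hmono : ∀ i j : Fin m, i.val < j.val → zfTime G B (x i) < zfTime G B (x j) := by
    intro i j
    obtain ⟨j, hj⟩ := j
    induction j with
    | zero =>
      intro hij
      exact absurd hij (by simp)
    | succ k ih =>
      intro hij
      have hij' : i.val < k + 1 := by simpa using hij
      have hk : k < m := Nat.lt_of_succ_lt hj
      rcases Nat.lt_or_ge i.val k with h' | h'
      · exact lt_trans (ih hk h') (hstep k hj)
      · have hik : i = (⟨k, hk⟩ : Fin m) := Fin.ext (show i.val = k by omega)
        rw [hik]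
        exact hstep k hj
  have main : ∀ i j : Fin m, i.val < j.val → G.Adj (x i) (x j) → i.val + 1 = j.val := by
    intro i j hij hadj
    by_contra hne
    have h1 : i.val + 1 < m := lt_of_le_of_lt hij j.isLt
    obtain ⟨hv, hw, hadj', huniq⟩ := hchain i h1
    have hij1 : (⟨i.val + 1, h1⟩ : Fin m).val < j.val := by simp; omega
    have hlt2 : zfTime G B (x ⟨i.val + 1, h1⟩) < zfTime G B (x j) := hmono _ _ hij1
    have hjw : x j ∉ zfIter G B (zfTime G B (x ⟨i.val + 1, h1⟩) - 1) := by
      intro hmem'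
      have := zfTime_le hmem'
      omega
    have heq := huniq (x j) hadj hjw
    rw [heq] at hlt2
    exact lt_irrefl _ hlt2
  refine ⟨?_, ?_⟩
  · intro i j hxy
    rcases lt_trichotomy i.val j.val with hlt | heq | hgt
    · have := hmono i j hlt; rw [hxy] at this; exact absurd this (lt_irrefl _)
    · exact Fin.ext heq
    · have := hmono j i hgt; rw [hxy] at this; exact absurd this (lt_irrefl _)
  · intro i j
    constructor
    · intro hadj
      rcases lt_trichotomy i.val j.val with hlt | heq | hgt
      · exact Or.inl (main i j hlt hadj)
      · exact absurd (Fin.ext heq : i = j) (by rintro rfl; exact G.irrefl hadj)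
      · exact Or.inr (main j i hgt hadj.symm)
    · rintro (h | h)
      · have h1 : i.val + 1 < m := h ▸ j.isLt
        have hj : j = (⟨i.val + 1, h1⟩ : Fin m) := Fin.ext h.symm
        rw [hj]
        exact (hchain i h1).2.2.1
      · have h1 : j.val + 1 < m := h ▸ i.isLt
        have hi : i = (⟨j.val + 1, h1⟩ : Fin m) := Fin.ext h.symm
        rw [hi]
        exact ((hchain j h1).2.2.1).symm
end

section
/- For the standard color change rule, if a graph G contains an induced subgraph G[S] on 2k vertices admitting a zero forcing set B_S with pt(G[S]; B_S) = 1 and |S \ B_S| = k, then th*_Z(G) ≤ |V(G)| − k. -/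
open SimpleGraph Set

/-- The no-initial-cost product throttling number for standard zero forcing. -/
noncomputable def thZprod {V : Type*} [Fintype V] (G : SimpleGraph V) : ℕ :=
  sInf {m | ∃ B : Set V, IsZFS G B ∧ B ≠ Set.univ ∧ m = B.ncard * zfpt G B}

theorem product_throttling_upper_bound {V : Type*} [Fintype V] [DecidableEq V]
    (G : SimpleGraph V) (k : ℕ) (hk : 0 < k) (S : Finset V) (hS : S.card = 2 * k)
    (BS : Set (↑(S : Set V) : Type _))
    (hZFS : IsZFS (G.induce (S : Set V)) BS)
    (hpt : zfpt (G.induce (S : Set V)) BS = 1)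
    (hwhite : ((S : Set V) \ (Subtype.val '' BS)).ncard = k) :
    thZprod G ≤ Fintype.card V - k := by
  set W : Set V := (S : Set V) \ (Subtype.val '' BS) with hW
  set B : Set V := Wᶜ with hB
  -- from hpt, one round suffices in the induced graph
  have hmem : zfpt (G.induce (S : Set V)) BS ∈
      {t | zfIter (G.induce (S : Set V)) BS t = Set.univ} :=
    Nat.sInf_mem hZFS
  rw [hpt] at hmem
  have hind1 : zfIter (G.induce (S : Set V)) BS 1 = Set.univ := hmem
  -- W is nonempty
  have hWne : W.Nonempty := by
    rw [← Set.ncard_pos (Set.toFinite W), hwhite]; exact hk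
  -- one round in G turns B into univ
  have h1 : zfIter G B 1 = Set.univ := by
    ext w
    simp only [Set.mem_univ, iff_true, zfIter, zfStep, Set.mem_union, Set.mem_setOf_eq]
    by_cases hwB : w ∈ B
    · exact Or.inl hwB
    · right
      have hwW : w ∈ W := by simpa [hB] using hwB
      have hwS : w ∈ (S : Set V) := hwW.1
      have hwBS : (⟨w, hwS⟩ : ↑(S : Set V)) ∉ BS := by
        intro h; exact hwW.2 ⟨_, h, rfl⟩
      have : (⟨w, hwS⟩ : ↑(S : Set V)) ∈ zfIter (G.induce (S : Set V)) BS 1 := by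
        rw [hind1]; trivial
      simp only [zfIter, zfStep, Set.mem_union, Set.mem_setOf_eq] at this
      rcases this with h | ⟨v', hv'⟩
      · exact absurd h hwBS
      obtain ⟨hv1, _, hv3, hv4⟩ := hv'
      refine ⟨(v' : V), ?_, hwB, hv3, ?_⟩
      · simp only [hB, Set.mem_compl_iff, hW, Set.mem_diff, not_and, not_not]
        intro _; exact ⟨v', hv1, rfl⟩
      · intro u hu huB
        have huW : u ∈ W := by simpa [hB] using huB
        have huS : u ∈ (S : Set V) := huW.1
        have huBS : (⟨u, huS⟩ : ↑(S : Set V)) ∉ BS := by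
          intro h; exact huW.2 ⟨_, h, rfl⟩
        have : (⟨u, huS⟩ : ↑(S : Set V)) = ⟨w, hwS⟩ :=
          hv4 ⟨u, huS⟩ hu huBS
        exact congrArg Subtype.val this
  have hBne : B ≠ Set.univ := by
    obtain ⟨x, hx⟩ := hWne
    intro h
    have : x ∈ B := h ▸ Set.mem_univ x
    exact this hx
  have hpt1 : zfpt G B = 1 := by
    have hle : zfpt G B ≤ 1 := Nat.sInf_le h1
    have hne : zfpt G B ≠ 0 := by
      intro h0
      have : zfpt G B ∈ {t | zfIter G B t = Set.univ} := Nat.sInf_mem ⟨1, h1⟩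
      rw [h0] at this
      exact hBne this
    omega
  have hcard : B.ncard = Fintype.card V - k := by
    have := Set.ncard_add_ncard_compl W
    rw [hwhite] at this
    rw [← hB] at this
    have hc : Nat.card V = Fintype.card V := Nat.card_eq_fintype_card
    omega
  have : thZprod G ≤ B.ncard * zfpt G B :=
    Nat.sInf_le ⟨B, ⟨1, h1⟩, hBne, rfl⟩
  rwa [hpt1, mul_one, hcard] at this
end
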